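/- arXiv:2102.04628 — 4 statements merged into one kernel-verified Lean document; each statement's English description precedes it below -/
import Mathlib

section
/- For any real γ > 0 and any integer n > 0, the sum ∑_{i=0}^{n} C(n,i) [1/(γ+i)² − 1/((γ+i)(γ+n−i))] is strictly positive. -/
theorem stmt_0 (γ : ℝ) (hγ : 0 < γ) (n : ℕ) (hn : 0 < n) :
    0 < ∑ i ∈ Finset.range (n + 1), (n.choose i : ℝ) *
      (1 / (γ + i) ^ 2 - 1 / ((γ + i) * (γ + n - i))) := by
  set f : ℕ → ℝ := fun i => (n.choose i : ℝ) *
      (1 / (γ + i) ^ 2 - 1 / ((γ + i) * (γ + n - i))) with hf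
  have hrefl : ∑ i ∈ Finset.range (n + 1), f (n - i)
      = ∑ i ∈ Finset.range (n + 1), f i := by
    have := Finset.sum_range_reflect f (n + 1)
    simpa using this
  have h2 : 2 * ∑ i ∈ Finset.range (n + 1), f i
      = ∑ i ∈ Finset.range (n + 1),
        (n.choose i : ℝ) * (1 / (γ + i) - 1 / (γ + n - i)) ^ 2 := by
    rw [two_mul]
    nth_rewrite 2 [← hrefl]
    rw [← Finset.sum_add_distrib]
    apply Finset.sum_congr rfl
    intro i hi
    rw [Finset.mem_range, Nat.lt_succ_iff] at hi
    have hcast : ((n - i : ℕ) : ℝ) = (n : ℝ) - i := Nat.cast_sub hi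
    have hchoose : (n.choose (n - i) : ℝ) = n.choose i := by
      rw [Nat.choose_symm hi]
    have ha : 0 < γ + (i : ℝ) := by positivity
    have hb : 0 < γ + (n : ℝ) - i := by
      have : (i : ℝ) ≤ n := by exact_mod_cast hi
      linarith
    simp only [hf, hcast, hchoose]
    have e1 : γ + ((n : ℝ) - i) = γ + n - i := by ring
    have e2 : γ + (n : ℝ) - ((n : ℝ) - i) = γ + i := by ring
    rw [e1, e2]
    field_simp
    ring
  have hpos : 0 < ∑ i ∈ Finset.range (n + 1),
      (n.choose i : ℝ) * (1 / (γ + i) - 1 / (γ + n - i)) ^ 2 := by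
    apply Finset.sum_pos' 
    · intro i hi
      positivity
    · refine ⟨0, Finset.mem_range.mpr (Nat.succ_pos n), ?_⟩
      have hn1 : (1 : ℝ) ≤ n := by exact_mod_cast hn
      have hlt : 1 / (γ + (n : ℝ) - 0) < 1 / γ := by
        apply one_div_lt_one_div_of_lt hγ
        linarith
      have hne : 1 / (γ + (0 : ℕ) : ℝ) - 1 / (γ + (n : ℝ) - (0 : ℕ)) ≠ 0 := by
        push_cast
        intro h
        rw [sub_eq_zero] at h
        simp at h hlt
        linarith
      have := pow_pos (abs_pos.mpr hne) 2
      calc (0:ℝ) < |1 / (γ + (0 : ℕ) : ℝ) - 1 / (γ + (n : ℝ) - (0 : ℕ))| ^ 2 := this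
        _ = (1 / (γ + (0 : ℕ) : ℝ) - 1 / (γ + (n : ℝ) - (0 : ℕ))) ^ 2 := sq_abs _
        _ = (n.choose 0 : ℝ) * (1 / (γ + (0:ℕ)) - 1 / (γ + n - (0:ℕ))) ^ 2 := by
            simp
  linarith
end

section
/- Let H be a polynomial (or analytic) function on ℝᴺ with H(1,…,1) = 1, let π₀ > 0, and suppose H satisfies the steady-state equation ∑_{i,j} k_{ij}(x^{ν_{ij}} − x_i) ∂H/∂x_i + ∑_j k_{0j} π₀ (x^{ν_{0j}} − 1) = 0 for all x. Then F := exp((H−1)/π₀) satisfies ∑_{i,j} k_{ij}(x^{ν_{ij}} − x_i) ∂F/∂x_i + ∑_j k_{0j}(x^{ν_{0j}} − 1) F = 0 for all x. -/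
theorem stmt_11 (N r₀ : ℕ) (r : Fin N → ℕ)
    (k : (i : Fin N) → Fin (r i) → ℝ) (hk : ∀ i j, 0 ≤ k i j)
    (k₀ : Fin r₀ → ℝ) (hk₀ : ∀ j, 0 ≤ k₀ j)
    (ν : (i : Fin N) → Fin (r i) → Fin N → ℕ) (ν₀ : Fin r₀ → Fin N → ℕ)
    (π₀ : ℝ) (hπ₀ : 0 < π₀)
    (H : (Fin N → ℝ) → ℝ) (hH : ContDiff ℝ 1 H) (hH1 : H (fun _ => 1) = 1)
    (hsteady : ∀ x : Fin N → ℝ,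
      (∑ i, ∑ j, k i j * ((∏ l, x l ^ ν i j l) - x i) * fderiv ℝ H x (Pi.single i 1))
        + ∑ j, k₀ j * π₀ * ((∏ l, x l ^ ν₀ j l) - 1) = 0) :
    ∀ x : Fin N → ℝ,
      (∑ i, ∑ j, k i j * ((∏ l, x l ^ ν i j l) - x i) *
          fderiv ℝ (fun y => Real.exp ((H y - 1) / π₀)) x (Pi.single i 1))
        + ∑ j, k₀ j * ((∏ l, x l ^ ν₀ j l) - 1) * Real.exp ((H x - 1) / π₀) = 0 := by
  intro x
  have hdH : HasFDerivAt H (fderiv ℝ H x) x :=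
    (hH.differentiable one_ne_zero x).hasFDerivAt
  have hdF : HasFDerivAt (fun y => Real.exp ((H y - 1) / π₀))
      (Real.exp ((H x - 1) / π₀) • (π₀⁻¹ • fderiv ℝ H x)) x := by
    have h1 : HasFDerivAt (fun y => (H y - 1) / π₀) (π₀⁻¹ • fderiv ℝ H x) x := by
      simpa [div_eq_inv_mul, smul_eq_mul, Pi.smul_def] using ((hdH.sub_const 1).const_smul π₀⁻¹)
    exact h1.exp
  have hfd : fderiv ℝ (fun y => Real.exp ((H y - 1) / π₀)) x
      = Real.exp ((H x - 1) / π₀) • (π₀⁻¹ • fderiv ℝ H x) := hdF.fderiv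
  set E := Real.exp ((H x - 1) / π₀) with hE
  have key := hsteady x
  have hπ : (π₀ : ℝ) ≠ 0 := ne_of_gt hπ₀
  have h2 : (∑ i, ∑ j, k i j * ((∏ l, x l ^ ν i j l) - x i) *
      fderiv ℝ (fun y => Real.exp ((H y - 1) / π₀)) x (Pi.single i 1))
      = (E / π₀) * ∑ i, ∑ j, k i j * ((∏ l, x l ^ ν i j l) - x i) *
        fderiv ℝ H x (Pi.single i 1) := by
    rw [Finset.mul_sum]
    refine Finset.sum_congr rfl fun i _ => ?_
    rw [Finset.mul_sum]
    refine Finset.sum_congr rfl fun j _ => ?_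
    rw [hfd]
    simp [ContinuousLinearMap.smul_apply, smul_eq_mul]
    ring
  have h3 : (∑ j, k₀ j * ((∏ l, x l ^ ν₀ j l) - 1) * E)
      = (E / π₀) * ∑ j, k₀ j * π₀ * ((∏ l, x l ^ ν₀ j l) - 1) := by
    rw [Finset.mul_sum]
    refine Finset.sum_congr rfl fun j _ => ?_
    field_simp
  rw [h2, h3, ← mul_add, key, mul_zero]
end

section
/- Consider the Markov chain on ℕ² with transitions (n₁,n₂) → (n₁+1,n₂+1) at rate k₁, (n₁,n₂) → (n₁+1,n₂) at rate k₂, (n₁,n₂) → (n₁−1,n₂) at rate d₁n₁, and (n₁,n₂) → (n₁,n₂−1) at rate d₂n₂. Then the bivariate Poisson distribution p_{n₁,n₂} = ∑_{i=0}^{min(n₁,n₂)} α₁^{n₁−i}α₂^{n₂−i}α₁₂^i/(i!(n₁−i)!(n₂−i)!) e^{−(α₁+α₂+α₁₂)}, with α₁ = (k₂(d₁+d₂)+k₁d₂)/(d₁(d₁+d₂)), α₂ = k₁d₁/(d₂(d₁+d₂)), α₁₂ = k₁/(d₁+d₂), is stationary: k₁p_{n₁−1,n₂−1} + k₂p_{n₁−1,n₂}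 + d₁(n₁+1)p_{n₁+1,n₂} + d₂(n₂+1)p_{n₁,n₂+1} = (k₁+k₂+d₁n₁+d₂n₂)p_{n₁,n₂} for all (n₁,n₂) ∈ ℕ². -/
/-- Bivariate Poisson distribution extended to `ℤ²` (zero for negative indices). -/
noncomputable def bivPoisson (α₁ α₂ α₁₂ : ℝ) (n₁ n₂ : ℤ) : ℝ :=
  if 0 ≤ n₁ ∧ 0 ≤ n₂ then
    (∑ i ∈ Finset.range (min n₁.toNat n₂.toNat + 1),
      α₁ ^ (n₁.toNat - i) * α₂ ^ (n₂.toNat - i) * α₁₂ ^ i /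
        (i.factorial * (n₁.toNat - i).factorial * (n₂.toNat - i).factorial)) *
      Real.exp (-(α₁ + α₂ + α₁₂)) 
  else 0

noncomputable def bpSum (α₁ α₂ α₁₂ : ℝ) (a b : ℕ) : ℝ :=
  ∑ i ∈ Finset.range (min a b + 1),
    α₁ ^ (a - i) * α₂ ^ (b - i) * α₁₂ ^ i /
      (i.factorial * (a - i).factorial * (b - i).factorial)

lemma bivPoisson_coe (α₁ α₂ α₁₂ : ℝ) (a b : ℕ) :
    bivPoisson α₁ α₂ α₁₂ a b = bpSum α₁ α₂ α₁₂ a b * Real.exp (-(α₁ + α₂ + α₁₂)) := by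
  simp [bivPoisson, bpSum]

lemma bpSum_zero_right (α₁ α₂ α₁₂ : ℝ) (a : ℕ) :
    bpSum α₁ α₂ α₁₂ a 0 = α₁ ^ a / a.factorial := by
  simp [bpSum]

/-- The key combinatorial recurrence at the level of the finite sums. -/
lemma recA (α₁ α₂ α₁₂ : ℝ) (m n : ℕ) :
    ((m : ℝ) + 1) * bpSum α₁ α₂ α₁₂ (m + 1) (n + 1)
      = α₁ * bpSum α₁ α₂ α₁₂ m (n + 1) + α₁₂ * bpSum α₁ α₂ α₁₂ m n := by
  classical
  set N := min m n with hN
  have hmin : min (m + 1) (n + 1) = N + 1 := by omega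
  -- f a b i
  set f : ℕ → ℕ → ℕ → ℝ := fun a b i =>
    α₁ ^ (a - i) * α₂ ^ (b - i) * α₁₂ ^ i /
      (i.factorial * (a - i).factorial * (b - i).factorial) with hf
  set F : ℕ → ℝ := fun i => if i ≤ m then α₁ * f m (n + 1) i else 0 with hF
  set G : ℕ → ℝ := fun i => if 1 ≤ i then α₁₂ * f m n (i - 1) else 0 with hG
  have h1 : α₁ * bpSum α₁ α₂ α₁₂ m (n + 1) = ∑ i ∈ Finset.range (N + 2), F i := by
    rw [bpSum, Finset.mul_sum]
    rcases le_or_gt m n with hmn | hmn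
    · have h1' : min m (n + 1) = m := by omega
      have h2' : N = m := by omega
      rw [h1', h2', Finset.sum_range_succ (f := F) (n := m + 1)]
      have : F (m + 1) = 0 := by simp [hF]
      rw [this, add_zero]
      refine Finset.sum_congr rfl fun i hi => ?_
      simp only [Finset.mem_range] at hi
      simp [hF, hf, Nat.lt_succ_iff.mp hi]
    · have h1' : min m (n + 1) = n + 1 := by omega
      have h2' : N = n := by omega
      rw [h1', h2']
      refine Finset.sum_congr rfl fun i hi => ?_
      simp only [Finset.mem_range] at hi
      have : i ≤ m := by omega
      simp [hF, hf, this]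
  have h2 : α₁₂ * bpSum α₁ α₂ α₁₂ m n = ∑ i ∈ Finset.range (N + 2), G i := by
    rw [Finset.sum_range_succ' (f := G) (n := N + 1)]
    have hG0 : G 0 = 0 := by simp [hG]
    rw [hG0, add_zero, bpSum, Finset.mul_sum]
    refine Finset.sum_congr rfl fun i hi => ?_
    simp [hG, hf]
  rw [h1, h2, ← Finset.sum_add_distrib, bpSum, hmin, Finset.mul_sum]
  refine Finset.sum_congr rfl fun i hi => ?_
  simp only [Finset.mem_range] at hi
  have hiN : i ≤ N + 1 := by omega
  -- pointwise identity
  rcases Nat.eq_zero_or_pos i with rfl | hipos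
  · -- i = 0
    have : F 0 = α₁ * f m (n + 1) 0 := by simp [hF]
    rw [this]
    have hG0 : G 0 = 0 := by simp [hG]
    rw [hG0, add_zero]
    simp only [hf, Nat.sub_zero, pow_zero, Nat.factorial_zero]
    rw [Nat.factorial_succ m]
    have hmf : (m.factorial : ℝ) ≠ 0 := Nat.cast_ne_zero.mpr (Nat.factorial_ne_zero m)
    have hnf : ((n + 1).factorial : ℝ) ≠ 0 := Nat.cast_ne_zero.mpr (Nat.factorial_ne_zero (n+1))
    field_simp
    push_cast
    ring
  · obtain ⟨j, rfl⟩ : ∃ j, i = j + 1 := ⟨i - 1, by omega⟩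
    have hjn : j ≤ n := by omega
    have hjm : j ≤ m := by omega
    have hGj : G (j + 1) = α₁₂ * f m n j := by simp [hG]
    rw [hGj]
    rcases le_or_gt (j + 1) m with hjm1 | hjm1
    · -- F (j+1) = α₁ * f m (n+1) (j+1)
      have hFj : F (j + 1) = α₁ * f m (n + 1) (j + 1) := by simp [hF, hjm1]
      rw [hFj]
      simp only [hf]
      have e1 : m + 1 - (j + 1) = m - j := by omega
      have e2 : n + 1 - (j + 1) = n - j := by omega
      have e3 : m - (j + 1) = m - j - 1 := by omega
      rw [e1, e2, e3]
      set c := m - j - 1 with hc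
      have e4 : m - j = c + 1 := by omega
      rw [e4]
      have hmc : (m : ℝ) + 1 = (c + 1 : ℕ) + ((j + 1 : ℕ) : ℝ) := by
        push_cast; have : m = c + 1 + j := by omega
        rw [this]; push_cast; ring
      have hjf : ((j + 1).factorial : ℝ) = (j + 1) * j.factorial := by
        rw [Nat.factorial_succ]; push_cast; ring
      have hcf : ((c + 1).factorial : ℝ) = (c + 1) * c.factorial := by
        rw [Nat.factorial_succ]; push_cast; ring
      have h1 : (j.factorial : ℝ) ≠ 0 := Nat.cast_ne_zero.mpr (Nat.factorial_ne_zero j)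
      have h2 : (c.factorial : ℝ) ≠ 0 := Nat.cast_ne_zero.mpr (Nat.factorial_ne_zero c)
      have h3 : ((n + 1 - (j + 1)).factorial : ℝ) ≠ 0 :=
        Nat.cast_ne_zero.mpr (Nat.factorial_ne_zero (n + 1 - (j + 1)))
      have h4 : ((n - j).factorial : ℝ) ≠ 0 :=
        Nat.cast_ne_zero.mpr (Nat.factorial_ne_zero (n - j))
      rw [e2] at h3
      have hj1 : ((j:ℝ) + 1) ≠ 0 := by positivity
      have hc1 : ((c:ℝ) + 1) ≠ 0 := by positivity
      rw [pow_succ α₁ c, pow_succ α₁₂ j, hjf, hcf, hmc]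
      push_cast
      field_simp
    · -- j = m, F = 0
      have hjm' : j = m := by omega
      subst hjm'
      have hFj : F (j + 1) = 0 := by simp [hF]
      rw [hFj, zero_add]
      simp only [hf]
      have e1 : j + 1 - (j + 1) = 0 := by omega
      have e2 : n + 1 - (j + 1) = n - j := by omega
      have e3 : j - j = 0 := by omega
      rw [e1, e2, e3]
      have hjf : ((j + 1).factorial : ℝ) = (j + 1) * j.factorial := by
        rw [Nat.factorial_succ]; push_cast; ring
      have h1 : (j.factorial : ℝ) ≠ 0 := Nat.cast_ne_zero.mpr (Nat.factorial_ne_zero j)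
      have h4 : ((n - j).factorial : ℝ) ≠ 0 :=
        Nat.cast_ne_zero.mpr (Nat.factorial_ne_zero (n - j))
      have hj1 : ((j:ℝ) + 1) ≠ 0 := by positivity
      rw [pow_succ α₁₂ j, hjf]
      push_cast
      field_simp

lemma bpSum_symm (α₁ α₂ α₁₂ : ℝ) (a b : ℕ) :
    bpSum α₁ α₂ α₁₂ a b = bpSum α₂ α₁ α₁₂ b a := by
  rw [bpSum, bpSum, min_comm b a]
  refine Finset.sum_congr rfl fun i _ => ?_
  ring

lemma bivPoisson_symm (α₁ α₂ α₁₂ : ℝ) (a b : ℤ) :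
    bivPoisson α₁ α₂ α₁₂ a b = bivPoisson α₂ α₁ α₁₂ b a := by
  unfold bivPoisson
  by_cases h : 0 ≤ a ∧ 0 ≤ b
  · rw [if_pos h, if_pos ⟨h.2, h.1⟩]
    have hexp : -(α₁ + α₂ + α₁₂) = -(α₂ + α₁ + α₁₂) := by ring
    rw [hexp, min_comm b.toNat a.toNat]
    congr 1
    refine Finset.sum_congr rfl fun i _ => ?_
    ring
  · rw [if_neg h, if_neg (by tauto)]

/-- Bivariate Poisson recurrence in the first variable. -/
lemma recP (α₁ α₂ α₁₂ : ℝ) (n₁ n₂ : ℕ) :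
    (n₁ : ℝ) * bivPoisson α₁ α₂ α₁₂ n₁ n₂
      = α₁ * bivPoisson α₁ α₂ α₁₂ ((n₁ : ℤ) - 1) n₂
        + α₁₂ * bivPoisson α₁ α₂ α₁₂ ((n₁ : ℤ) - 1) ((n₂ : ℤ) - 1) := by
  rcases n₁ with _ | m
  · have h1 : ((0 : ℕ) : ℤ) - 1 = (-1 : ℤ) := by norm_num
    rw [h1]
    have hz : ∀ b : ℤ, bivPoisson α₁ α₂ α₁₂ (-1) b = 0 := fun b => by
      rw [bivPoisson, if_neg (by omega)]
    simp [hz]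
  · have h1 : ((m + 1 : ℕ) : ℤ) - 1 = (m : ℤ) := by push_cast; ring
    rw [h1]
    rcases n₂ with _ | n
    · have h2 : ((0 : ℕ) : ℤ) - 1 = (-1 : ℤ) := by norm_num
      rw [h2]
      have hz : bivPoisson α₁ α₂ α₁₂ (m : ℤ) (-1) = 0 := by
        rw [bivPoisson, if_neg (by omega : ¬(0 ≤ (m : ℤ) ∧ 0 ≤ (-1 : ℤ)))]
      rw [hz, mul_zero, add_zero, bivPoisson_coe, bivPoisson_coe,
        bpSum_zero_right, bpSum_zero_right]
      have hjf : ((m + 1).factorial : ℝ) = (m + 1) * m.factorial := by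
        rw [Nat.factorial_succ]; push_cast; ring
      have h1' : (m.factorial : ℝ) ≠ 0 := Nat.cast_ne_zero.mpr (Nat.factorial_ne_zero m)
      have hm1 : ((m:ℝ) + 1) ≠ 0 := by positivity
      rw [hjf, pow_succ α₁ m]
      push_cast
      field_simp
    · have h2 : ((n + 1 : ℕ) : ℤ) - 1 = (n : ℤ) := by push_cast; ring
      rw [h2, bivPoisson_coe, bivPoisson_coe, bivPoisson_coe]
      push_cast
      have := recA α₁ α₂ α₁₂ m n
      nlinarith [this, Real.exp_pos (-(α₁ + α₂ + α₁₂))]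

/-- Bivariate Poisson recurrence in the second variable. -/
lemma recQ (α₁ α₂ α₁₂ : ℝ) (n₁ n₂ : ℕ) :
    (n₂ : ℝ) * bivPoisson α₁ α₂ α₁₂ n₁ n₂
      = α₂ * bivPoisson α₁ α₂ α₁₂ n₁ ((n₂ : ℤ) - 1)
        + α₁₂ * bivPoisson α₁ α₂ α₁₂ ((n₁ : ℤ) - 1) ((n₂ : ℤ) - 1) := by
  have h := recP α₂ α₁ α₁₂ n₂ n₁
  rw [bivPoisson_symm α₂ α₁ α₁₂ (n₂ : ℤ) (n₁ : ℤ),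
    bivPoisson_symm α₂ α₁ α₁₂ ((n₂ : ℤ) - 1) (n₁ : ℤ),
    bivPoisson_symm α₂ α₁ α₁₂ ((n₂ : ℤ) - 1) ((n₁ : ℤ) - 1)] at h
  exact h

theorem stmt_13 (k₁ k₂ d₁ d₂ : ℝ) (hk₁ : 0 < k₁) (hk₂ : 0 < k₂)
    (hd₁ : 0 < d₁) (hd₂ : 0 < d₂) :
    let α₁ : ℝ := (k₂ * (d₁ + d₂) + k₁ * d₂) / (d₁ * (d₁ + d₂))
    let α₂ : ℝ := k₁ * d₁ / (d₂ * (d₁ + d₂))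
    let α₁₂ : ℝ := k₁ / (d₁ + d₂)
    let p : ℤ → ℤ → ℝ := bivPoisson α₁ α₂ α₁₂
    ∀ n₁ n₂ : ℕ,
      k₁ * p ((n₁ : ℤ) - 1) ((n₂ : ℤ) - 1) + k₂ * p ((n₁ : ℤ) - 1) n₂
        + d₁ * ((n₁ : ℝ) + 1) * p ((n₁ : ℤ) + 1) n₂
        + d₂ * ((n₂ : ℝ) + 1) * p n₁ ((n₂ : ℤ) + 1)
      = (k₁ + k₂ + d₁ * n₁ + d₂ * n₂) * p n₁ n₂ := by
  intro α₁ α₂ α₁₂ p n₁ n₂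
  have hα₁ : α₁ = (k₂ * (d₁ + d₂) + k₁ * d₂) / (d₁ * (d₁ + d₂)) := rfl
  have hα₂ : α₂ = k₁ * d₁ / (d₂ * (d₁ + d₂)) := rfl
  have hα₁₂ : α₁₂ = k₁ / (d₁ + d₂) := rfl
  have hd12 : d₁ + d₂ ≠ 0 := by positivity
  have hd₁' : d₁ ≠ 0 := ne_of_gt hd₁
  have hd₂' : d₂ ≠ 0 := ne_of_gt hd₂
  have c4 : k₁ - (d₁ + d₂) * α₁₂ = 0 := by
    rw [hα₁₂]; field_simp; ring
  have c3 : k₂ + d₂ * α₁₂ - d₁ * α₁ = 0 := by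
    rw [hα₁₂, hα₁]; field_simp; ring
  have c2 : d₁ * α₁₂ - d₂ * α₂ = 0 := by
    rw [hα₁₂, hα₂]; field_simp; ring
  have c1 : d₁ * α₁ + d₂ * α₂ - k₁ - k₂ = 0 := by
    rw [hα₁, hα₂]; field_simp; ring
  have E1 := recP α₁ α₂ α₁₂ (n₁ + 1) n₂
  have E2 := recQ α₁ α₂ α₁₂ n₁ (n₂ + 1)
  have E3 := recP α₁ α₂ α₁₂ n₁ n₂
  have E4 := recQ α₁ α₂ α₁₂ n₁ n₂
  have h1 : ((n₁ + 1 : ℕ) : ℤ) = (n₁ : ℤ) + 1 := by push_cast; ring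
  have h2 : ((n₂ + 1 : ℕ) : ℤ) = (n₂ : ℤ) + 1 := by push_cast; ring
  have h3 : (n₁ : ℤ) + 1 - 1 = (n₁ : ℤ) := by ring
  have h4 : (n₂ : ℤ) + 1 - 1 = (n₂ : ℤ) := by ring
  rw [h1, h3] at E1
  rw [h2, h4] at E2
  push_cast at E1 E2
  show k₁ * bivPoisson α₁ α₂ α₁₂ ((n₁ : ℤ) - 1) ((n₂ : ℤ) - 1)
      + k₂ * bivPoisson α₁ α₂ α₁₂ ((n₁ : ℤ) - 1) n₂
      + d₁ * ((n₁ : ℝ) + 1) * bivPoisson α₁ α₂ α₁₂ ((n₁ : ℤ) + 1) n₂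
      + d₂ * ((n₂ : ℝ) + 1) * bivPoisson α₁ α₂ α₁₂ n₁ ((n₂ : ℤ) + 1)
    = (k₁ + k₂ + d₁ * n₁ + d₂ * n₂) * bivPoisson α₁ α₂ α₁₂ n₁ n₂
  linear_combination d₁ * E1 + d₂ * E2 - d₁ * E3 - d₂ * E4
    + bivPoisson α₁ α₂ α₁₂ ((n₁ : ℤ) - 1) ((n₂ : ℤ) - 1) * c4
    + bivPoisson α₁ α₂ α₁₂ ((n₁ : ℤ) - 1) (n₂ : ℤ) * c3
    + bivPoisson α₁ α₂ α₁₂ (n₁ : ℤ) ((n₂ : ℤ) - 1) * c2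
    + bivPoisson α₁ α₂ α₁₂ (n₁ : ℤ) (n₂ : ℤ) * c1
end

section
/- For positive reals μ₂, B, ν, the quantity ρ = √(μ₂B/((1+ν)(1+ν+(1+ν+μ₂)B))) satisfies 0 < ρ < 1 and is strictly increasing in B and in μ₂, and strictly decreasing in ν. -/
lemma denom_pos (μ₂ B ν : ℝ) (hμ : 0 < μ₂) (hB : 0 < B) (hν : 0 < ν) :
    0 < (1 + ν) * (1 + ν + (1 + ν + μ₂) * B) := by positivity

theorem stmt_19 :
    let ρ : ℝ → ℝ → ℝ → ℝ := fun μ₂ B ν =>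
      Real.sqrt (μ₂ * B / ((1 + ν) * (1 + ν + (1 + ν + μ₂) * B)))
    (∀ μ₂ B ν : ℝ, 0 < μ₂ → 0 < B → 0 < ν → 0 < ρ μ₂ B ν ∧ ρ μ₂ B ν < 1) ∧
    (∀ μ₂ B B' ν : ℝ, 0 < μ₂ → 0 < B → 0 < B' → 0 < ν → B < B' → ρ μ₂ B ν < ρ μ₂ B' ν) ∧
    (∀ μ₂ μ₂' B ν : ℝ, 0 < μ₂ → 0 < μ₂' → 0 < B → 0 < ν → μ₂ < μ₂' → ρ μ₂ B ν < ρ μ₂' B ν) ∧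
    (∀ μ₂ B ν ν' : ℝ, 0 < μ₂ → 0 < B → 0 < ν → 0 < ν' → ν < ν' → ρ μ₂ B ν' < ρ μ₂ B ν) := by
  intro ρ
  refine ⟨?_, ?_, ?_, ?_⟩
  · intro μ₂ B ν hμ hB hν
    have hd := denom_pos μ₂ B ν hμ hB hν
    constructor
    · apply Real.sqrt_pos.mpr
      positivity
    · have h1 : μ₂ * B / ((1 + ν) * (1 + ν + (1 + ν + μ₂) * B)) < 1 := by
        rw [div_lt_one hd]
        nlinarith [mul_pos (mul_pos hν hμ) hB, mul_pos hν hν, mul_pos (mul_pos hν hν) hB, mul_pos hμ hB]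
      calc Real.sqrt (μ₂ * B / ((1 + ν) * (1 + ν + (1 + ν + μ₂) * B)))
          < Real.sqrt 1 := Real.sqrt_lt_sqrt (by positivity) h1
        _ = 1 := Real.sqrt_one
  · intro μ₂ B B' ν hμ hB hB' hν hlt
    apply Real.sqrt_lt_sqrt (by positivity)
    rw [div_lt_div_iff₀ (denom_pos μ₂ B ν hμ hB hν) (denom_pos μ₂ B' ν hμ hB' hν)]
    nlinarith [mul_pos (mul_pos hμ (sub_pos.mpr hlt)) (mul_pos (by linarith : (0:ℝ) < 1 + ν) (by linarith : (0:ℝ) < 1 + ν))]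
  · intro μ₂ μ₂' B ν hμ hμ' hB hν hlt
    apply Real.sqrt_lt_sqrt (by positivity)
    rw [div_lt_div_iff₀ (denom_pos μ₂ B ν hμ hB hν) (denom_pos μ₂' B ν hμ' hB hν)]
    nlinarith [mul_pos (mul_pos (mul_pos hB (sub_pos.mpr hlt)) (by linarith : (0:ℝ) < 1 + ν)) (by linarith : (0:ℝ) < 1 + B)]
  · intro μ₂ B ν ν' hμ hB hν hν' hlt
    apply Real.sqrt_lt_sqrt (by positivity)
    apply div_lt_div_of_pos_left (by positivity) (denom_pos μ₂ B ν hμ hB hν)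
    nlinarith [mul_pos (sub_pos.mpr hlt) hB, mul_pos hν hν', mul_pos hμ hB, mul_pos (mul_pos (sub_pos.mpr hlt) hB) hμ, mul_pos (mul_pos hν hν') hB]
end
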